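/- Let 𝔤 be a Lie algebra over ℂ of countable dimension, let 𝔟 be a Lie ideal of 𝔤, and let 𝔞 be a Lie subalgebra of 𝔤 such that 𝔤 = 𝔞 ⊕ 𝔟 as vector spaces (so 𝔤 is the semidirect product 𝔞 ⋉ 𝔟). Let M be a simple 𝔤-module, and suppose H is a subspace of M that is invariant under the action of 𝔟, is a simple 𝔟-module under this restricted action, and carries a 𝔤-module structure whose restriction to 𝔟 coincides with the 𝔟-action inherited from M (this 𝔤-module is denoted H^𝔤). Then there exists a simple 𝔤-module U on which every element of 𝔟 acts as zero, such that M is isomorphic as a 𝔤-module to U ⊗_ℂ H^𝔤, where 𝔤 acts diagonally on the tensor product: x·(u ⊗ h) = (x·u) ⊗ h + u ⊗ (x·h). -/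

import Mathlib

open TensorProduct Cardinal Polynomial

section Aux
set_option linter.unusedSectionVars false

variable {g : Type} [LieRing g] [LieAlgebra ℂ g] {b : LieSubalgebra ℂ g}
variable {H : Type} [AddCommGroup H] [Module ℂ H] [LieRingModule g H] [LieModule ℂ g H]

/-- Schur: a nonzero `b`-equivariant endomorphism of an irreducible `b`-module is bijective. -/
lemma aux_schur (hH : LieModule.IsIrreducible ℂ b H)
    (f : H →ₗ[ℂ] H) (hf : ∀ y ∈ b, ∀ h : H, f ⁅y, h⁆ = ⁅y, f h⁆) (hne : f ≠ 0) :
    Function.Bijective f := by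
  haveI := hH
  constructor
  · -- injective: kernel is a Lie submodule
    have hker : (⟨LinearMap.ker f, by
        intro y h hh
        have hh' : f h = 0 := hh
        show f ⁅(y : g), h⁆ = 0
        rw [hf y y.2 h, hh', lie_zero]⟩ : LieSubmodule ℂ b H) ≠ ⊤ := by
      intro htop
      apply hne
      ext h
      have : h ∈ LinearMap.ker f := by
        have : (h : H) ∈ (⊤ : LieSubmodule ℂ b H) := trivial
        rw [← htop] at this
        exact this
      simpa using this
    have := (eq_bot_or_eq_top (⟨LinearMap.ker f, _⟩ : LieSubmodule ℂ b H)).resolve_right hker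
    rw [← LinearMap.ker_eq_bot]
    exact congrArg LieSubmodule.toSubmodule this
  · -- surjective: range is a Lie submodule
    have hrange : (⟨LinearMap.range f, by
        intro y h hh
        obtain ⟨h', rfl⟩ := hh
        exact ⟨⁅(y : g), h'⁆, hf y y.2 h'⟩⟩ : LieSubmodule ℂ b H) ≠ ⊥ := by
      intro hbot
      apply hne
      ext h
      have : f h ∈ (⊥ : LieSubmodule ℂ b H) := by
        rw [← hbot]; exact ⟨h, rfl⟩
      simpa using this
    have := (eq_bot_or_eq_top (⟨LinearMap.range f, _⟩ : LieSubmodule ℂ b H)).resolve_left hrange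
    rw [← LinearMap.range_eq_top]
    exact congrArg LieSubmodule.toSubmodule this

end Aux

section Aux2

set_option linter.unusedSectionVars false

variable {g : Type} [LieRing g] [LieAlgebra ℂ g] {b : LieSubalgebra ℂ g}
variable {H : Type} [AddCommGroup H] [Module ℂ H] [LieRingModule g H] [LieModule ℂ g H]

lemma aux_isUnit_aeval (d : Module.End ℂ H)
    (hσ : ∀ c : ℂ, IsUnit (algebraMap ℂ (Module.End ℂ H) c - d))
    {p : ℂ[X]} (hp : p ≠ 0) : IsUnit (aeval d p) := by
  by_contra hcon
  have hsplit := Splits.eq_prod_roots (IsAlgClosed.splits (k := ℂ) p)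
  rw [hsplit, map_mul, aeval_C] at hcon
  have lead_unit : IsUnit (algebraMap ℂ (Module.End ℂ H) p.leadingCoeff) :=
    (IsUnit.mk0 _ (leadingCoeff_ne_zero.mpr hp)).map (algebraMap ℂ (Module.End ℂ H))
  have hprod : ¬ IsUnit ((aeval d) (Multiset.map (fun a => X - C a) p.roots).prod) :=
    fun h => hcon (lead_unit.mul h)
  obtain ⟨k, hk, -⟩ := spectrum.exists_mem_of_not_isUnit_aeval_prod hprod
  exact (spectrum.mem_iff.mp hk) (hσ k)

/-- Dixmier: a `b`-equivariant endomorphism of an irreducible `b`-module of countable dimension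
over `ℂ` is a scalar. -/
lemma aux_dixmier (hH : LieModule.IsIrreducible ℂ b H) (hrank : Module.rank ℂ H ≤ ℵ₀)
    (d : H →ₗ[ℂ] H) (hd : ∀ y ∈ b, ∀ h : H, d ⁅y, h⁆ = ⁅y, d h⁆) :
    ∃ c : ℂ, d = c • LinearMap.id := by
  haveI := hH
  haveI : Nontrivial H := LieModule.nontrivial_of_isIrreducible ℂ b H
  by_contra hcon
  push_neg at hcon
  -- every `d - c • id` is bijective
  have hbij : ∀ c : ℂ, Function.Bijective (d - c • LinearMap.id : H →ₗ[ℂ] H) := by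
    intro c
    refine aux_schur hH _ (fun y hy h => ?_) (sub_ne_zero.mpr (hcon c))
    simp only [LinearMap.sub_apply, LinearMap.smul_apply, LinearMap.id_apply]
    rw [hd y hy h, lie_sub, lie_smul]
  have hσ : ∀ c : ℂ, IsUnit (algebraMap ℂ (Module.End ℂ H) c - d) := by
    intro c
    rw [Module.End.isUnit_iff]
    have heq : (algebraMap ℂ (Module.End ℂ H) c - d) = -(d - c • LinearMap.id) := by
      ext h
      simp [Module.algebraMap_end_apply]
    rw [heq]
    exact neg_involutive.bijective.comp (hbij c)
  -- construct an uncountable linearly independent family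
  obtain ⟨h₀, hh₀⟩ := exists_ne (0 : H)
  have hinv := fun c : ℂ => (hσ c).unit
  set v : ℂ → H := fun c => (((hσ c).unit⁻¹ : (Module.End ℂ H)ˣ) : Module.End ℂ H) h₀ with hv
  have hvspec : ∀ c : ℂ, (algebraMap ℂ (Module.End ℂ H) c - d) (v c) = h₀ := by
    intro c
    have := (hσ c).unit.mul_inv
    calc (algebraMap ℂ (Module.End ℂ H) c - d) (v c)
        = (((hσ c).unit : Module.End ℂ H) * (((hσ c).unit⁻¹ : (Module.End ℂ H)ˣ) : Module.End ℂ H)) h₀ := rfl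
      _ = h₀ := by rw [this]; rfl
  have hli : LinearIndependent ℂ v := by
    rw [linearIndependent_iff']
    intro s cf hsum i₀ hi₀
    -- apply the polynomial ∏_{j ∈ s} (X - C j) ... shifted: here factors are (C j - X)
    set P : ℂ → ℂ[X] := fun i => ∏ j ∈ s.erase i, (C j - X) with hP
    have hQv : ∀ i ∈ s, (aeval d (∏ j ∈ s, (C j - X))) (v i) = (aeval d (P i)) h₀ := by
      intro i hi
      rw [← Finset.prod_erase_mul _ _ hi, map_mul]
      have hvi : (aeval d (C i - X)) (v i) = h₀ := by
        simpa [Module.algebraMap_end_apply] using hvspec i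
      simp only [Module.End.mul_apply, hvi]
      rfl
    have hker : (aeval d (∑ i ∈ s, C (cf i) * P i)) h₀ = 0 := by
      have e1 : (aeval d (∑ i ∈ s, C (cf i) * P i)) h₀
          = ∑ i ∈ s, cf i • (aeval d (P i)) h₀ := by
        rw [map_sum, LinearMap.sum_apply]
        refine Finset.sum_congr rfl fun i hi => ?_
        rw [map_mul, aeval_C, Module.End.mul_apply]
        simp [Module.algebraMap_end_apply]
      rw [e1]
      have e2 : ∀ i ∈ s, cf i • (aeval d (P i)) h₀
          = (aeval d (∏ j ∈ s, (C j - X))) (cf i • v i) := by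
        intro i hi
        rw [map_smul, hQv i hi]
      rw [Finset.sum_congr rfl e2, ← map_sum, hsum, map_zero]
    have hpz : (∑ i ∈ s, C (cf i) * P i) = 0 := by
      by_contra hpz
      have := aux_isUnit_aeval d hσ hpz
      rw [Module.End.isUnit_iff] at this
      exact hh₀ (this.injective (by simpa using hker))
    have := congrArg (fun q => Polynomial.eval i₀ q) hpz
    simp only [eval_zero, eval_finset_sum] at this
    rw [Finset.sum_eq_single i₀] at this
    · simp only [eval_mul, eval_C, hP, eval_prod, eval_sub, eval_X] at this
      rcases mul_eq_zero.mp this with h | h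
      · exact h
      · exfalso
        rw [Finset.prod_eq_zero_iff] at h
        obtain ⟨j, hj, hj0⟩ := h
        rw [sub_eq_zero] at hj0
        exact (Finset.mem_erase.mp hj).1 hj0
    · intro j hj hne
      simp only [eval_mul, eval_C, hP, eval_prod, eval_sub, eval_X]
      rw [Finset.prod_eq_zero (Finset.mem_erase.mpr ⟨hne.symm, hi₀⟩)]
      · ring
      · rw [sub_self]
    · intro h; exact absurd hi₀ h
  have hcard := hli.cardinal_le_rank
  rw [mk_complex] at hcard
  exact absurd (hcard.trans hrank) (not_le.mpr (aleph0_lt_continuum))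

end Aux2

section AuxL

set_option linter.unusedSectionVars false
set_option maxHeartbeats 1000000

variable {g : Type} [LieRing g] [LieAlgebra ℂ g] {b : LieSubalgebra ℂ g}
variable {H : Type} [AddCommGroup H] [Module ℂ H] [LieRingModule g H] [LieModule ℂ g H]
variable {M : Type} [AddCommGroup M] [Module ℂ M] [LieRingModule g M] [LieModule ℂ g M]


/-- Key linear-independence lemma: if `u j` (for `j ∈ s`) are linearly independent
`b`-equivariant maps `H →ₗ M` and `∑ j in s, u j (h j) = 0`, then all `h j = 0`. -/
lemma aux_L (hH : LieModule.IsIrreducible ℂ b H) (hrank : Module.rank ℂ H ≤ ℵ₀)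
    {κ : Type} (n : ℕ) (s : Finset κ) (hcard : s.card = n) (u : κ → (H →ₗ[ℂ] M))
    (hueqv : ∀ j ∈ s, ∀ y ∈ b, ∀ h : H, u j ⁅y, h⁆ = ⁅y, u j h⁆)
    (huind : ∀ c : κ → ℂ, (∑ j ∈ s, c j • u j) = 0 → ∀ j ∈ s, c j = 0)
    (h : κ → H) (hrel : ∑ j ∈ s, u j (h j) = 0) : ∀ j ∈ s, h j = 0 := by
  classical
  haveI := hH
  haveI : Nontrivial H := LieModule.nontrivial_of_isIrreducible ℂ b H
  induction n generalizing s h with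
  | zero =>
    rw [Finset.card_eq_zero] at hcard
    subst hcard
    intro j hj
    exact absurd hj (Finset.notMem_empty j)
  | succ m IH =>
    intro j₀ hj₀
    by_contra hne
    -- the linear map recording the relation
    set σf : (κ → H) →ₗ[ℂ] M := ∑ j ∈ s, (u j).comp (LinearMap.proj j) with hσf
    have hσapp : ∀ k : κ → H, σf k = ∑ j ∈ s, u j (k j) := by
      intro k; simp [hσf, LinearMap.sum_apply]
    -- the submodule of "relations supported on s"
    set V : Submodule ℂ (κ → H) :=
      { carrier := {k | ∀ j, j ∉ s → k j = 0}
        add_mem' := fun ha hb j hj => by simp [ha j hj, hb j hj]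
        zero_mem' := fun j hj => rfl
        smul_mem' := fun c k hk j hj => by simp [hk j hj] } with hV
    set S : Submodule ℂ (κ → H) := LinearMap.ker σf ⊓ V with hS
    -- the componentwise bracket operation
    have hBr : ∀ y : g, ∀ k ∈ S, (fun j => ⁅y, k j⁆) ∈ V := by
      intro y k hk j hj
      show ⁅y, k j⁆ = 0
      rw [hk.2 j hj, lie_zero]
    have hBrS : ∀ y ∈ b, ∀ k ∈ S, (fun j => ⁅y, k j⁆) ∈ S := by
      intro y hy k hk
      refine ⟨?_, hBr y k hk⟩
      show (fun j => ⁅y, k j⁆) ∈ LinearMap.ker σf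
      rw [LinearMap.mem_ker, hσapp]
      have : ∀ j ∈ s, u j ⁅y, k j⁆ = (LieModule.toEnd ℂ g M y) (u j (k j)) := by
        intro j hj
        rw [hueqv j hj y hy (k j)]
        rfl
      rw [Finset.sum_congr rfl this, ← map_sum, ← hσapp]
      have : σf k = 0 := hk.1
      rw [this, map_zero]
    -- injectivity of the j₀-coordinate on S
    have hinj : ∀ k ∈ S, k j₀ = 0 → k = 0 := by
      intro k hk hk0
      have hrel' : ∑ j ∈ s.erase j₀, u j (k j) = 0 := by
        have h2 : ∑ j ∈ s, u j (k j) = 0 := by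
          rw [← hσapp]; exact LinearMap.mem_ker.mp hk.1
        rwa [← Finset.add_sum_erase _ _ hj₀, hk0, map_zero, zero_add] at h2
      have hind' : ∀ c : κ → ℂ, (∑ j ∈ s.erase j₀, c j • u j) = 0 → ∀ j ∈ s.erase j₀, c j = 0 := by
        intro c hc j hj
        have h3 : ∑ j ∈ s, (fun i => if i = j₀ then 0 else c i) j • u j = 0 := by
          rw [← Finset.add_sum_erase _ _ hj₀]
          simp only [if_pos rfl, zero_smul, zero_add]
          have heq : ∑ j ∈ s.erase j₀, (if j = j₀ then (0:ℂ) else c j) • u j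
              = ∑ j ∈ s.erase j₀, c j • u j :=
            Finset.sum_congr rfl fun i hi => by rw [if_neg (Finset.mem_erase.mp hi).1]
          rw [heq, hc]; simp
        have := huind _ h3 j (Finset.mem_of_mem_erase hj)
        rwa [if_neg (Finset.mem_erase.mp hj).1] at this
      have hz := IH (s.erase j₀) (by rw [Finset.card_erase_of_mem hj₀, hcard]; rfl)
        (fun j hj => hueqv j (Finset.mem_of_mem_erase hj)) hind' k hrel'
      funext j
      by_cases hjs : j ∈ s
      · by_cases hjj : j = j₀
        · rw [hjj]; exact hk0
        · exact hz j (Finset.mem_erase.mpr ⟨hjj, hjs⟩)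
      · exact hk.2 j hjs
    -- the coordinate projection at j₀, restricted to S
    set P : S →ₗ[ℂ] H := (LinearMap.proj j₀).comp S.subtype with hPdef
    have hPinj : Function.Injective P := by
      intro k1 k2 h12
      have hmem : ((k1 : κ → H) - (k2 : κ → H)) ∈ S := sub_mem k1.2 k2.2
      have hcoord : ((k1 : κ → H) - (k2 : κ → H)) j₀ = 0 := by
        have : (k1 : κ → H) j₀ = (k2 : κ → H) j₀ := h12
        simp [this]
      have hz := hinj _ hmem hcoord
      exact Subtype.ext (sub_eq_zero.mp hz)
    -- the image of the j₀ coordinate is a Lie submodule of H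
    set T : Submodule ℂ H := S.map (LinearMap.proj j₀) with hT
    have hTlie : ∀ (y : ↥b) (w : H), w ∈ T → ⁅(y : g), w⁆ ∈ T := by
      rintro y w ⟨k, hkS, rfl⟩
      exact ⟨fun j => ⁅(y : g), k j⁆, hBrS y y.2 k hkS, rfl⟩
    set TL : LieSubmodule ℂ b H := { toSubmodule := T, lie_mem := fun {y w} hw => hTlie y w hw }
      with hTL
    -- h restricted to s belongs to S
    have hh'S : (fun j => if j ∈ s then h j else 0) ∈ S := by
      constructor
      · show σf _ = 0
        rw [hσapp]
        have : ∀ j ∈ s, u j (if j ∈ s then h j else 0) = u j (h j) := fun j hj => by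
          rw [if_pos hj]
        rw [Finset.sum_congr rfl this, hrel]
      · intro j hj
        show (if j ∈ s then h j else 0) = 0
        rw [if_neg hj]
    have hTtop : TL = ⊤ := by
      refine (eq_bot_or_eq_top TL).resolve_left fun hbot => hne ?_
      have : h j₀ ∈ TL := ⟨_, hh'S, by simp [if_pos hj₀]⟩
      rw [hbot] at this
      simpa using this
    have hPsurj : Function.Surjective P := by
      intro w
      have : w ∈ TL := by rw [hTtop]; trivial
      obtain ⟨k, hkS, hkw⟩ := this
      exact ⟨⟨k, hkS⟩, hkw⟩
    set e : S ≃ₗ[ℂ] H := LinearEquiv.ofBijective P ⟨hPinj, hPsurj⟩ with he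
    have hecoord : ∀ w : H, ((e.symm w : S) : κ → H) j₀ = w := fun w =>
      e.apply_symm_apply w
    -- the coefficient maps
    set φ : κ → (H →ₗ[ℂ] H) := fun j =>
      ((LinearMap.proj j).comp S.subtype).comp (e.symm : H →ₗ[ℂ] S) with hφ
    have hφapp : ∀ (j : κ) (w : H), φ j w = ((e.symm w : S) : κ → H) j := fun j w => rfl
    have hφeqv : ∀ j ∈ s, ∀ y ∈ b, ∀ w : H, φ j ⁅y, w⁆ = ⁅y, φ j w⁆ := by
      intro j hj y hy w
      set k : S := e.symm w with hk
      set k' : S := ⟨fun i => ⁅y, (k : κ → H) i⁆, hBrS y hy _ k.2⟩ with hk'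
      have hek' : e k' = ⁅y, w⁆ := by
        show P k' = ⁅y, w⁆
        show ⁅y, (k : κ → H) j₀⁆ = ⁅y, w⁆
        rw [hecoord w]
      have hsymm : e.symm ⁅y, w⁆ = k' := by
        rw [LinearEquiv.symm_apply_eq, hek']
      rw [hφapp, hφapp, hsymm]
    have hdix : ∀ j ∈ s, ∃ c : ℂ, φ j = c • LinearMap.id := fun j hj =>
      aux_dixmier hH hrank (φ j) (hφeqv j hj)
    set c : κ → ℂ := fun j => if hj : j ∈ s then (hdix j hj).choose else 0 with hc
    have hφc : ∀ j ∈ s, ∀ w : H, φ j w = c j • w := by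
      intro j hj w
      have hspec := LinearMap.congr_fun (hdix j hj).choose_spec w
      rw [hc]
      simp only [dif_pos hj]
      exact hspec
    have hsum0 : ∑ j ∈ s, c j • u j = 0 := by
      ext w
      rw [LinearMap.sum_apply, LinearMap.zero_apply]
      have : ∀ j ∈ s, (c j • u j) w = u j (((e.symm w : S) : κ → H) j) := by
        intro j hj
        rw [LinearMap.smul_apply, ← map_smul, ← hφc j hj w, hφapp]
      rw [Finset.sum_congr rfl this, ← hσapp]
      exact LinearMap.mem_ker.mp (e.symm w : S).2.1
    have hc0 := huind c hsum0 j₀ hj₀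
    obtain ⟨w, hw⟩ := exists_ne (0 : H)
    apply hw
    have := hφc j₀ hj₀ w
    rw [hφapp, hecoord w, hc0, zero_smul] at this
    exact this

end AuxL

section AuxR
set_option linter.unusedSectionVars false
variable {g : Type} [LieRing g] [LieAlgebra ℂ g]
variable {M : Type} [AddCommGroup M] [Module ℂ M] [LieRingModule g M] [LieModule ℂ g M]

/-- A simple module over a countable-dimensional Lie algebra has countable dimension. -/
lemma aux_rankM (hcount : Module.rank ℂ g ≤ ℵ₀)
    (hM : LieModule.IsIrreducible ℂ g M) : Module.rank ℂ M ≤ ℵ₀ := by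
  haveI := hM
  haveI : Nontrivial M := LieModule.nontrivial_of_isIrreducible ℂ g M
  obtain ⟨m, hm⟩ := exists_ne (0 : M)
  set B := Module.Basis.ofVectorSpace ℂ g with hB
  have hBcard : #(Module.Basis.ofVectorSpaceIndex ℂ g) ≤ ℵ₀ := by
    rw [B.mk_eq_rank'']; exact hcount
  set sg : Set g := Set.range B with hsg
  have hsgc : sg.Countable := by
    haveI : Countable (Module.Basis.ofVectorSpaceIndex ℂ g) := Cardinal.mk_le_aleph0_iff.mp hBcard
    exact Set.countable_range B
  have hsgspan : Submodule.span ℂ sg = ⊤ := B.span_eq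
  set Tset : ℕ → Set M := fun n =>
    Nat.rec ({m} : Set M) (fun _ Tn => Set.image2 (fun x v => ⁅x, v⁆) sg Tn) n with hTset
  have hTc : ∀ n, (Tset n).Countable := by
    intro n
    induction n with
    | zero => exact Set.countable_singleton m
    | succ n ih => exact Set.Countable.image2 hsgc ih _
  set Tu : Set M := ⋃ n, Tset n with hTu
  have hTuc : Tu.Countable := Set.countable_iUnion hTc
  set N : Submodule ℂ M := Submodule.span ℂ Tu with hN
  have hstep : ∀ x ∈ sg, ∀ v ∈ N, ⁅x, v⁆ ∈ N := by
    intro x hx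
    have hsub : Tu ⊆ (N.comap (LieModule.toEnd ℂ g M x) : Set M) := by
      intro v hv
      obtain ⟨n, hn⟩ := Set.mem_iUnion.mp hv
      have h2 : ⁅x, v⁆ ∈ Tset (n + 1) := Set.mem_image2_of_mem hx hn
      exact Submodule.subset_span (Set.mem_iUnion.mpr ⟨n + 1, h2⟩)
    intro v hv
    exact Submodule.span_le.mpr hsub hv
  set A : Submodule ℂ g :=
    { carrier := {x | ∀ v ∈ N, ⁅x, v⁆ ∈ N}
      add_mem' := fun {x y} hx hy v hv => by
        rw [add_lie]; exact N.add_mem (hx v hv) (hy v hv)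
      zero_mem' := fun v hv => by rw [zero_lie]; exact N.zero_mem
      smul_mem' := fun t x hx v hv => by
        rw [smul_lie]; exact N.smul_mem t (hx v hv) } with hA
  have hAall : ∀ x : g, ∀ v ∈ N, ⁅x, v⁆ ∈ N := by
    have h1 : Submodule.span ℂ sg ≤ A := Submodule.span_le.mpr hstep
    rw [hsgspan] at h1
    intro x
    exact h1 (Submodule.mem_top (x := x))
  set NL : LieSubmodule ℂ g M := ⟨N, fun {x v} hv => hAall x v hv⟩ with hNL
  have hNtop : NL = ⊤ := by
    refine (eq_bot_or_eq_top NL).resolve_left fun hbot => hm ?_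
    have : m ∈ NL := Submodule.subset_span (Set.mem_iUnion.mpr ⟨0, rfl⟩)
    rw [hbot] at this
    simpa using this
  have hNtop' : N = ⊤ := congrArg LieSubmodule.toSubmodule hNtop
  calc Module.rank ℂ M = Module.rank ℂ (⊤ : Submodule ℂ M) := (rank_top ℂ M).symm
    _ = Module.rank ℂ N := by rw [hNtop']
    _ ≤ #Tu := rank_span_le Tu
    _ ≤ ℵ₀ := by
        haveI := hTuc.to_subtype
        exact Cardinal.mk_le_aleph0

end AuxR

set_option maxHeartbeats 1600000 in
set_option maxRecDepth 16000 in
/-- Let `𝔤` be a countable-dimensional Lie algebra over `ℂ`, `𝔟` an ideal of `𝔤`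
(formalized as a Lie subalgebra `b` satisfying the ideal condition), and `𝔞` a Lie subalgebra with
`𝔤 = 𝔞 ⊕ 𝔟` as vector spaces. Let `M` be a simple `𝔤`-module and `H` a `𝔤`-module (the module
`H^𝔤`) together with an injective linear embedding `ι : H →ₗ[ℂ] M` which is `𝔟`-equivariant (so
that the image of `H` is a `𝔟`-invariant subspace of `M`, whose inherited `𝔟`-action coincides
with the restriction to `𝔟` of the `𝔤`-action on `H`), and suppose `H` is a simple `𝔟`-module.
Then there exists a simple `𝔤`-module `U` on which every element of `𝔟` acts as zero, such that
`M ≅ U ⊗[ℂ] H` as `𝔤`-modules, with the diagonal action `x·(u ⊗ h) = (x·u) ⊗ h + u ⊗ (x·h)`. -/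
theorem simple_module_semidirect_product_tensor
    (g : Type) [LieRing g] [LieAlgebra ℂ g]
    (hcount : Module.rank ℂ g ≤ ℵ₀)
    (a b : LieSubalgebra ℂ g)
    (hideal : ∀ x : g, ∀ y ∈ b, ⁅x, y⁆ ∈ b)
    (hcompl : IsCompl a.toSubmodule b.toSubmodule)
    (M : Type) [AddCommGroup M] [Module ℂ M] [LieRingModule g M] [LieModule ℂ g M]
    (hM : LieModule.IsIrreducible ℂ g M)
    (H : Type) [AddCommGroup H] [Module ℂ H] [LieRingModule g H] [LieModule ℂ g H]
    (ι : H →ₗ[ℂ] M) (hι : Function.Injective ι)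
    (hequiv : ∀ x ∈ b, ∀ h : H, ι ⁅x, h⁆ = ⁅x, ι h⁆)
    (hH : LieModule.IsIrreducible ℂ b H) :
    ∃ (U : Type) (_ : AddCommGroup U) (_ : Module ℂ U) (_ : LieRingModule g U)
      (_ : LieModule ℂ g U),
      LieModule.IsIrreducible ℂ g U ∧
      (∀ x ∈ b, ∀ u : U, ⁅x, u⁆ = 0) ∧
      Nonempty (M ≃ₗ⁅ℂ,g⁆ (U ⊗[ℂ] H)) := by
  classical
  haveI := hM
  haveI := hH
  haveI : Nontrivial M := LieModule.nontrivial_of_isIrreducible ℂ g M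
  haveI : Nontrivial H := LieModule.nontrivial_of_isIrreducible ℂ b H
  have hrankM : Module.rank ℂ M ≤ ℵ₀ := aux_rankM hcount hM
  have hrankH : Module.rank ℂ H ≤ ℵ₀ := le_trans (LinearMap.rank_le_of_injective ι hι) hrankM
  -- the space of b-equivariant linear maps H → M
  set Usub : Submodule ℂ (H →ₗ[ℂ] M) :=
    { carrier := {f | ∀ y ∈ b, ∀ h : H, f ⁅y, h⁆ = ⁅y, f h⁆}
      add_mem' := fun {f1 f2} h1 h2 y hy h => by
        simp only [LinearMap.add_apply, h1 y hy h, h2 y hy h, lie_add]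
      zero_mem' := fun y hy h => by simp
      smul_mem' := fun c f hf y hy h => by
        simp only [LinearMap.smul_apply, hf y hy h, lie_smul] } with hUsub
  -- the action of g
  set ρ : g → (H →ₗ[ℂ] M) → (H →ₗ[ℂ] M) := fun x f =>
    ((LieModule.toEnd ℂ g M x) ∘ₗ f) - (f ∘ₗ (LieModule.toEnd ℂ g H x)) with hρ
  have hρapp : ∀ (x : g) (f : H →ₗ[ℂ] M) (h : H), ρ x f h = ⁅x, f h⁆ - f ⁅x, h⁆ := by
    intro x f h; rfl
  have hρU : ∀ x : g, ∀ f ∈ Usub, ρ x f ∈ Usub := by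
    intro x f hf y hy h
    show ρ x f ⁅y, h⁆ = ⁅y, ρ x f h⁆
    rw [hρapp, hρapp, hf y hy h, leibniz_lie x y h, map_add, hf _ (hideal x y hy),
      hf _ hy, leibniz_lie x y (f h), lie_sub]
    abel
  letI instBr : LieRingModule g Usub :=
    { bracket := fun x u => ⟨ρ x u.val, hρU x u.val u.2⟩
      add_lie := fun x y u => Subtype.ext (by
        show ρ (x + y) u.val = ρ x u.val + ρ y u.val
        ext h
        simp only [hρapp, LinearMap.add_apply, add_lie, map_add]
        abel)
      lie_add := fun x u v => Subtype.ext (by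
        show ρ x (u.val + v.val) = ρ x u.val + ρ x v.val
        ext h
        simp only [hρapp, LinearMap.add_apply, lie_add]
        abel)
      leibniz_lie := fun x y u => Subtype.ext (by
        show ρ x (ρ y u.val) = ρ ⁅x, y⁆ u.val + ρ y (ρ x u.val)
        ext h
        simp only [hρapp, LinearMap.add_apply, lie_sub, map_sub,
          leibniz_lie x y (u.val h), leibniz_lie x y h, map_add]
        abel) }
  have hbrk : ∀ (x : g) (u : Usub), (⁅x, u⁆ : Usub).val = ρ x u.val := fun x u => rfl
  letI instLM : LieModule ℂ g Usub :=
    { smul_lie := fun t x u => Subtype.ext (by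
        show ρ (t • x) u.val = t • ρ x u.val
        ext h
        simp only [hρapp, LinearMap.smul_apply, smul_lie, map_smul, smul_sub])
      lie_smul := fun t x u => Subtype.ext (by
        show ρ x (t • u.val) = t • ρ x u.val
        ext h
        simp only [hρapp, LinearMap.smul_apply, lie_smul, map_smul, smul_sub]) }
  -- b acts trivially
  have hbzero : ∀ x ∈ b, ∀ u : Usub, ⁅x, u⁆ = 0 := by
    intro x hx u
    apply Subtype.ext
    show ρ x u.val = 0
    ext h
    rw [hρapp, u.2 x hx h, sub_self]
    rfl
  -- the evaluation map
  set ev : (Usub ⊗[ℂ] H) →ₗ[ℂ] M := TensorProduct.lift Usub.subtype with hev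
  have hevtmul : ∀ (u : Usub) (h : H), ev (u ⊗ₜ[ℂ] h) = u.val h := fun u h => rfl
  have hbrT : ∀ (x : g) (u : Usub) (hh : H), (⁅x, u ⊗ₜ[ℂ] hh⁆ : Usub ⊗[ℂ] H)
      = ⁅x, u⁆ ⊗ₜ[ℂ] hh + u ⊗ₜ[ℂ] ⁅x, hh⁆ := by
    intro x u hh
    show (TensorProduct.LieModule.hasBracketAux x) (u ⊗ₜ[ℂ] hh) = _
    simp only [TensorProduct.LieModule.hasBracketAux, LinearMap.add_apply,
      LinearMap.rTensor_tmul, LinearMap.lTensor_tmul, LieModule.toEnd_apply_apply]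
  have hevlie : ∀ (x : g) (t : Usub ⊗[ℂ] H), ev ⁅x, t⁆ = ⁅x, ev t⁆ := by
    intro x t
    show ev (TensorProduct.LieModule.hasBracketAux x t) = ⁅x, ev t⁆
    induction t using TensorProduct.induction_on with
    | zero => rw [map_zero, map_zero, lie_zero]
    | tmul u h =>
      have hb : (TensorProduct.LieModule.hasBracketAux x) (u ⊗ₜ[ℂ] h)
          = ⁅x, u⁆ ⊗ₜ[ℂ] h + u ⊗ₜ[ℂ] ⁅x, h⁆ := hbrT x u h
      rw [hb, map_add, hevtmul, hevtmul, hevtmul, hbrk, hρapp]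
      abel
    | add t1 t2 ih1 ih2 => rw [map_add, map_add, ih1, ih2, map_add, lie_add]
  -- ι as an element of Usub
  set uι : Usub := ⟨ι, fun y hy h => hequiv y hy h⟩ with huι
  have hιne : uι ≠ 0 := by
    intro h0
    obtain ⟨h, hh⟩ := exists_ne (0 : H)
    apply hh
    apply hι
    rw [map_zero]
    calc ι h = (uι : H →ₗ[ℂ] M) h := rfl
      _ = ((0 : Usub) : H →ₗ[ℂ] M) h := by rw [h0]
      _ = 0 := rfl
  haveI : Nontrivial Usub := ⟨⟨uι, 0, hιne⟩⟩
  -- surjectivity of ev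
  have hsurj : Function.Surjective ev := by
    set RL : LieSubmodule ℂ g M :=
      { toSubmodule := LinearMap.range ev
        lie_mem := fun {x v} hv => by
          obtain ⟨t, rfl⟩ := hv
          exact ⟨⁅x, t⁆, hevlie x t⟩ } with hRL
    have : RL = ⊤ := by
      refine (eq_bot_or_eq_top RL).resolve_left fun hbot => ?_
      obtain ⟨h, hh⟩ := exists_ne (0 : H)
      have hmem : ι h ∈ RL := ⟨uι ⊗ₜ[ℂ] h, rfl⟩
      rw [hbot] at hmem
      have : ι h = 0 := by simpa using hmem
      exact hh (hι (by simpa using this))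
    intro v
    have : v ∈ RL := by rw [this]; trivial
    exact this
  -- injectivity of ev
  set bU := Module.Basis.ofVectorSpace ℂ Usub with hbU
  have hrep : ∀ t : Usub ⊗[ℂ] H, ∃ (sfin : Finset (Module.Basis.ofVectorSpaceIndex ℂ Usub))
      (hh : Module.Basis.ofVectorSpaceIndex ℂ Usub → H), t = ∑ j ∈ sfin, (bU j) ⊗ₜ[ℂ] hh j := by
    intro t
    induction t using TensorProduct.induction_on with
    | zero => exact ⟨∅, fun _ => 0, by simp⟩
    | tmul u h =>
      refine ⟨(bU.repr u).support, fun j => (bU.repr u) j • h, ?_⟩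
      have h1 : ∀ j ∈ (bU.repr u).support,
          (bU j) ⊗ₜ[ℂ] ((bU.repr u) j • h) = ((bU.repr u) j • bU j) ⊗ₜ[ℂ] h := by
        intro j hj
        rw [TensorProduct.tmul_smul, TensorProduct.smul_tmul']
      rw [Finset.sum_congr rfl h1, ← TensorProduct.sum_tmul]
      have h2 : (∑ j ∈ (bU.repr u).support, (bU.repr u) j • bU j) = u := by
        conv_rhs => rw [← bU.linearCombination_repr u]
        rw [Finsupp.linearCombination_apply, Finsupp.sum]
      rw [h2]
    | add t1 t2 ih1 ih2 =>
      obtain ⟨s1, h1, rfl⟩ := ih1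
      obtain ⟨s2, h2, rfl⟩ := ih2
      refine ⟨s1 ∪ s2, fun j => (if j ∈ s1 then h1 j else 0) + (if j ∈ s2 then h2 j else 0), ?_⟩
      have e1 : ∑ j ∈ s1 ∪ s2, (bU j) ⊗ₜ[ℂ]
            ((if j ∈ s1 then h1 j else 0) + (if j ∈ s2 then h2 j else 0))
          = (∑ j ∈ s1 ∪ s2, (bU j) ⊗ₜ[ℂ] (if j ∈ s1 then h1 j else 0))
            + (∑ j ∈ s1 ∪ s2, (bU j) ⊗ₜ[ℂ] (if j ∈ s2 then h2 j else 0)) := by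
        rw [← Finset.sum_add_distrib]
        exact Finset.sum_congr rfl fun j hj => TensorProduct.tmul_add _ _ _
      rw [e1]
      congr 1
      · rw [← Finset.sum_subset Finset.subset_union_left
          (fun j hj hj1 => by rw [if_neg hj1, TensorProduct.tmul_zero])]
        exact (Finset.sum_congr rfl fun j hj => by rw [if_pos hj]).symm
      · rw [← Finset.sum_subset Finset.subset_union_right
          (fun j hj hj2 => by rw [if_neg hj2, TensorProduct.tmul_zero])]
        exact (Finset.sum_congr rfl fun j hj => by rw [if_pos hj]).symm
  have hker0 : ∀ t : Usub ⊗[ℂ] H, ev t = 0 → t = 0 := by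
    intro t ht
    obtain ⟨sfin, hh, rfl⟩ := hrep t
    have hsum : ∑ j ∈ sfin, (bU j).val (hh j) = 0 := by
      rw [map_sum] at ht
      simpa [hevtmul] using ht
    have hindep : ∀ c : Module.Basis.ofVectorSpaceIndex ℂ Usub → ℂ,
        (∑ j ∈ sfin, c j • (bU j).val) = 0 → ∀ j ∈ sfin, c j = 0 := by
      intro c hc j hj
      have hval : Usub.subtype (∑ j ∈ sfin, c j • bU j) = 0 := by
        rw [map_sum]
        simpa using hc
      have h0 : (∑ j ∈ sfin, c j • bU j) = 0 := by
        apply Submodule.injective_subtype Usub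
        simpa using hval
      exact linearIndependent_iff'.mp bU.linearIndependent sfin c h0 j hj
    have hz := aux_L hH hrankH sfin.card sfin rfl (fun j => (bU j).val)
      (fun j hj y hy h => (bU j).2 y hy h) hindep hh hsum
    have : ∀ j ∈ sfin, (bU j) ⊗ₜ[ℂ] hh j = 0 := by
      intro j hj
      rw [hz j hj, TensorProduct.tmul_zero]
    rw [Finset.sum_congr rfl this, Finset.sum_const_zero]
  have hinj : Function.Injective ev := by
    intro t1 t2 h12
    have h0 : ev (t1 - t2) = 0 := by rw [map_sub, h12, sub_self]
    exact sub_eq_zero.mp (hker0 _ h0)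
  -- irreducibility of Usub
  haveI hUirr : LieModule.IsIrreducible ℂ g Usub := by
    constructor
    intro W
    by_cases hWbot : W = ⊥
    · exact Or.inl hWbot
    refine Or.inr ?_
    have hex : ∃ w : Usub, w ∈ W ∧ w ≠ 0 := by
      by_contra hno
      push_neg at hno
      apply hWbot
      ext u
      simp only [LieSubmodule.mem_bot]
      exact ⟨fun hu => by by_contra hne; exact hne (hno u hu), fun hu => by rw [hu]; exact W.zero_mem⟩
    obtain ⟨w, hwW, hwne⟩ := hex
    -- the span of W ⊗ H
    set GW : Set (Usub ⊗[ℂ] H) := {t | ∃ w' : Usub, w' ∈ W ∧ ∃ hh : H, t = w' ⊗ₜ[ℂ] hh} with hGW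
    set AW : Submodule ℂ (Usub ⊗[ℂ] H) := Submodule.span ℂ GW with hAW
    have hAWinv : ∀ x : g, AW ≤ AW.comap (LieModule.toEnd ℂ g (Usub ⊗[ℂ] H) x) := by
      intro x
      rw [hAW, Submodule.span_le]
      rintro t ⟨w', hw', hh, rfl⟩
      show (⁅x, w' ⊗ₜ[ℂ] hh⁆ : Usub ⊗[ℂ] H) ∈ AW
      rw [hbrT]
      exact AW.add_mem
        (Submodule.subset_span ⟨⁅x, w'⁆, W.lie_mem hw', hh, rfl⟩)
        (Submodule.subset_span ⟨w', hw', ⁅x, hh⁆, rfl⟩)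
    set MW : LieSubmodule ℂ g M :=
      { toSubmodule := AW.map ev
        lie_mem := fun {x v} hv => by
          obtain ⟨t, ht, rfl⟩ := hv
          exact ⟨⁅x, t⁆, hAWinv x ht, (hevlie x t)⟩ } with hMW
    have hMWtop : MW = ⊤ := by
      refine (eq_bot_or_eq_top MW).resolve_left fun hbot => ?_
      have hwval : (w : H →ₗ[ℂ] M) ≠ 0 := by
        intro h0
        exact hwne (Subtype.ext h0)
      obtain ⟨hh, hhne⟩ : ∃ hh : H, (w : H →ₗ[ℂ] M) hh ≠ 0 := by
        by_contra hno
        push_neg at hno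
        exact hwval (LinearMap.ext fun hh => by rw [hno hh]; rfl)
      have hmem : (w : H →ₗ[ℂ] M) hh ∈ MW :=
        ⟨w ⊗ₜ[ℂ] hh, Submodule.subset_span ⟨w, hwW, hh, rfl⟩, rfl⟩
      rw [hbot] at hmem
      exact hhne (by simpa using hmem)
    have hAWtop : ∀ t : Usub ⊗[ℂ] H, t ∈ AW := by
      intro t
      have : ev t ∈ MW := by rw [hMWtop]; trivial
      obtain ⟨t', ht', hevt⟩ := this
      rwa [hinj hevt] at ht'
    -- a dual functional
    obtain ⟨h₀, hh₀⟩ := exists_ne (0 : H)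
    obtain ⟨f, hf0, -⟩ := Submodule.exists_dual_map_eq_bot_of_notMem
      (p := (⊥ : Submodule ℂ H)) (x := h₀) (by simpa using hh₀) inferInstance
    set ψ : H →ₗ[ℂ] ℂ := (f h₀)⁻¹ • f with hψ
    have hψ1 : ψ h₀ = 1 := by
      rw [hψ]
      simp only [LinearMap.smul_apply, smul_eq_mul]
      exact inv_mul_cancel₀ hf0
    set Ξ : (Usub ⊗[ℂ] H) →ₗ[ℂ] Usub := TensorProduct.lift
      { toFun := fun u => ψ.smulRight u
        map_add' := fun u v => by
          ext hh
          simp only [LinearMap.smulRight_apply, LinearMap.add_apply, smul_add]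
        map_smul' := fun c u => by
          ext hh
          simp only [LinearMap.smulRight_apply, LinearMap.smul_apply, RingHom.id_apply]
          rw [smul_comm] } with hΞ
    have hΞtmul : ∀ (u : Usub) (hh : H), Ξ (u ⊗ₜ[ℂ] hh) = ψ hh • u := fun u hh => rfl
    have hΞW : ∀ t ∈ AW, Ξ t ∈ W := by
      intro t ht
      have : AW ≤ (W : Submodule ℂ Usub).comap Ξ := by
        rw [hAW, Submodule.span_le]
        rintro t' ⟨w', hw', hh, rfl⟩
        show Ξ (w' ⊗ₜ[ℂ] hh) ∈ (W : Submodule ℂ Usub)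
        rw [hΞtmul]
        exact Submodule.smul_mem _ _ hw'
      exact this ht
    have hall : ∀ u : Usub, u ∈ W := by
      intro u
      have := hΞW (u ⊗ₜ[ℂ] h₀) (hAWtop _)
      rwa [hΞtmul, hψ1, one_smul] at this
    ext u
    simp only [LieSubmodule.mem_top, iff_true]
    exact hall u
  -- assemble the equivalence
  set evLie : (Usub ⊗[ℂ] H) →ₗ⁅ℂ,g⁆ M :=
    { toLinearMap := ev
      map_lie' := fun {x t} => hevlie x t } with hevLie
  set eV : (Usub ⊗[ℂ] H) ≃ₗ[ℂ] M := LinearEquiv.ofBijective ev ⟨hinj, hsurj⟩ with heV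
  set E : (Usub ⊗[ℂ] H) ≃ₗ⁅ℂ,g⁆ M :=
    { toLieModuleHom := evLie
      invFun := eV.symm
      left_inv := eV.left_inv
      right_inv := eV.right_inv } with hE
  exact ⟨Usub, inferInstance, inferInstance, instBr, instLM, hUirr, hbzero, ⟨E.symm⟩⟩
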